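/- Concentration over light couples (bound on P₂ in the proof of Lemma 2): let n ≥ 1, p̄ ∈ (0,1], and let (A_{vw})_{1≤w<v≤n} be independent {0,1}-valued random variables with P(A_{vw}=1) = M_{vw} ≤ p̄; extend symmetrically by A_{wv} = A_{vw}, M_{wv} = M_{vw}, with zero diagonal. Let x, y ∈ ℝⁿ with ‖x‖₂ ≤ 1 and ‖y‖₂ ≤ 1, and define the set of light couples 𝓛 = {(v,w) : |x_v·y_w| ≤ √(p̄/n)}. Then for every C > 3: P( Σ_{(v,w)∈𝓛} x_v·A_{vw}·y_w − xᵀM y ≥ C·√(n·p̄) ) ≤ exp( (3−C)·n/2 ). -/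

import Mathlib

open Finset

/-- Unordered pairs of distinct indices, represented as ordered pairs `(v, w)` with `v < w`. -/
abbrev Pairs (n : ℕ) : Type := {q : Fin n × Fin n // q.1 < q.2}

/-- Probability mass of an outcome of independent Bernoulli random variables indexed by the
unordered pairs, with means `M q`. -/
noncomputable def massB {n : ℕ} (M : Pairs n → ℝ) (ω : Pairs n → Bool) : ℝ :=
  ∏ q, (if ω q then M q else 1 - M q)

/-- Probability of a set of outcomes. -/
noncomputable def PrB {n : ℕ} (M : Pairs n → ℝ) (S : Set (Pairs n → Bool)) : ℝ :=
  ∑ ω : Pairs n → Bool, Set.indicator S (massB M) ω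

/-- The symmetric zero-diagonal matrix of means built from `M`. -/
def Mmat {n : ℕ} (M : Pairs n → ℝ) (v w : Fin n) : ℝ :=
  if h : v < w then M ⟨(v, w), h⟩ else if h' : w < v then M ⟨(w, v), h'⟩ else 0

/-- The symmetric zero-diagonal 0/1 matrix of outcomes built from `ω`. -/
def Aval {n : ℕ} (ω : Pairs n → Bool) (v w : Fin n) : ℝ :=
  if h : v < w then (if ω ⟨(v, w), h⟩ then 1 else 0)
  else if h' : w < v then (if ω ⟨(w, v), h'⟩ then 1 else 0) else 0

lemma expquad {v : ℝ} (hv : |v| ≤ 1) : Real.exp v ≤ 1 + v + v ^ 2 * (3/4) := by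
  have h := Real.exp_bound hv (by norm_num : 0 < 2)
  have h2 : (∑ m ∈ range 2, v ^ m / m.factorial) = 1 + v := by
    simp [Finset.sum_range_succ]
  rw [h2, sq_abs] at h
  have := (abs_le.mp h).2
  norm_num [Nat.factorial] at this
  linarith

lemma factor_bound {pb m u : ℝ} (hm0 : 0 ≤ m) (hmpb : m ≤ pb) (hpb1 : pb ≤ 1)
    (hu : |u| ≤ 1) :
    m * Real.exp (u * (1 - m)) + (1 - m) * Real.exp (u * (0 - m)) ≤ Real.exp (u ^ 2 * pb) := by
  have hm1 : m ≤ 1 := hmpb.trans hpb1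
  have hu1 : |u * (1 - m)| ≤ 1 := by
    rw [abs_mul]
    have : |1 - m| ≤ 1 := by rw [abs_of_nonneg (by linarith)]; linarith
    nlinarith [abs_nonneg u, abs_nonneg (1 - m)]
  have hu2 : |u * (0 - m)| ≤ 1 := by
    rw [abs_mul]
    have : |0 - m| ≤ 1 := by rw [abs_of_nonpos (by linarith)]; linarith
    nlinarith [abs_nonneg u, abs_nonneg (0 - m)]
  have h1 := expquad hu1
  have h2 := expquad hu2
  have key : m * Real.exp (u * (1 - m)) + (1 - m) * Real.exp (u * (0 - m))
      ≤ 1 + u ^ 2 * pb := by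
    have e1 : m * Real.exp (u * (1 - m)) ≤ m * (1 + u * (1 - m) + (u * (1 - m)) ^ 2 * (3/4)) :=
      mul_le_mul_of_nonneg_left h1 hm0
    have e2 : (1 - m) * Real.exp (u * (0 - m))
        ≤ (1 - m) * (1 + u * (0 - m) + (u * (0 - m)) ^ 2 * (3/4)) :=
      mul_le_mul_of_nonneg_left h2 (by linarith)
    nlinarith [sq_nonneg u, sq_nonneg (u * m), sq_nonneg (u * (1 - m))]
  calc m * Real.exp (u * (1 - m)) + (1 - m) * Real.exp (u * (0 - m)) ≤ 1 + u ^ 2 * pb := key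
    _ ≤ Real.exp (u ^ 2 * pb) := by linarith [Real.add_one_le_exp (u ^ 2 * pb)]

lemma sum_pairs {n : ℕ} (F : Fin n → Fin n → ℝ) (hd : ∀ v, F v v = 0) :
    ∑ v, ∑ w, F v w = ∑ q : Pairs n, (F q.1.1 q.1.2 + F q.1.2 q.1.1) := by
  classical
  have h1 : ∑ v, ∑ w, F v w = ∑ p : Fin n × Fin n, F p.1 p.2 :=
    (Fintype.sum_prod_type (fun p : Fin n × Fin n => F p.1 p.2)).symm
  have h2 : ∀ p : Fin n × Fin n, F p.1 p.2 =
      (if p.1 < p.2 then F p.1 p.2 else 0) + (if p.2 < p.1 then F p.1 p.2 else 0) := by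
    intro p
    rcases lt_trichotomy p.1 p.2 with h | h | h
    · simp [h, asymm h]
    · simp [h, hd, lt_irrefl]
    · simp [h, asymm h]
  have h3 : ∑ p : Fin n × Fin n, (if p.1 < p.2 then F p.1 p.2 else 0)
      = ∑ q : Pairs n, F q.1.1 q.1.2 := by
    rw [← Finset.sum_filter]
    exact Finset.sum_subtype _ (by simp) _
  have h4 : ∑ p : Fin n × Fin n, (if p.2 < p.1 then F p.1 p.2 else 0)
      = ∑ q : Pairs n, F q.1.2 q.1.1 := by
    rw [← Finset.sum_filter]
    rw [Finset.sum_subtype (p := fun p : Fin n × Fin n => p.2 < p.1) _ (by simp)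
      (fun p => F p.1 p.2)]
    exact (Fintype.sum_equiv
      (⟨fun q => ⟨(q.1.2, q.1.1), q.2⟩, fun q => ⟨(q.1.2, q.1.1), q.2⟩,
        fun q => rfl, fun q => rfl⟩ : Pairs n ≃ {p : Fin n × Fin n // p.2 < p.1})
      (fun q : Pairs n => F q.1.2 q.1.1)
      (fun p : {p : Fin n × Fin n // p.2 < p.1} => F p.1.1 p.1.2) (fun q => rfl)).symm
  calc ∑ v, ∑ w, F v w = ∑ p : Fin n × Fin n,
        ((if p.1 < p.2 then F p.1 p.2 else 0) + (if p.2 < p.1 then F p.1 p.2 else 0)) := by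
        rw [h1]; exact Finset.sum_congr rfl (fun p _ => h2 p)
    _ = ∑ q : Pairs n, (F q.1.1 q.1.2 + F q.1.2 q.1.1) := by
        rw [Finset.sum_add_distrib, h3, h4, ← Finset.sum_add_distrib]

lemma sumsq_pairs {n : ℕ} (x y : Fin n → ℝ) (hx : ∑ v, x v ^ 2 ≤ 1) (hy : ∑ v, y v ^ 2 ≤ 1) :
    ∑ q : Pairs n, ((x q.1.1 * y q.1.2) ^ 2 + (x q.1.2 * y q.1.1) ^ 2) ≤ 1 := by
  classical
  have h := sum_pairs (fun v w => if v = w then (0:ℝ) else (x v * y w) ^ 2) (by simp)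
  have hr : ∑ q : Pairs n,
        ((if q.1.1 = q.1.2 then (0:ℝ) else (x q.1.1 * y q.1.2) ^ 2)
          + (if q.1.2 = q.1.1 then (0:ℝ) else (x q.1.2 * y q.1.1) ^ 2))
      = ∑ q : Pairs n, ((x q.1.1 * y q.1.2) ^ 2 + (x q.1.2 * y q.1.1) ^ 2) := by
    refine Finset.sum_congr rfl fun q _ => ?_
    have hne : q.1.1 ≠ q.1.2 := ne_of_lt q.2
    rw [if_neg hne, if_neg hne.symm]
  rw [hr] at h
  rw [← h]
  have hb : ∑ v, ∑ w, (if v = w then (0:ℝ) else (x v * y w) ^ 2)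
      ≤ ∑ v, ∑ w, (x v * y w) ^ 2 := by
    refine Finset.sum_le_sum fun v _ => Finset.sum_le_sum fun w _ => ?_
    by_cases hvw : v = w
    · simp only [if_pos hvw]; positivity
    · simp [hvw]
  have hb2 : ∑ v, ∑ w, (x v * y w) ^ 2 = (∑ v, x v ^ 2) * (∑ w, y w ^ 2) := by
    rw [Finset.sum_mul_sum]
    exact Finset.sum_congr rfl fun v _ => Finset.sum_congr rfl fun w _ => by ring
  have hx0 : 0 ≤ ∑ v, x v ^ 2 := Finset.sum_nonneg fun v _ => sq_nonneg _
  have hy0 : 0 ≤ ∑ v, y v ^ 2 := Finset.sum_nonneg fun v _ => sq_nonneg _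
  calc ∑ v, ∑ w, (if v = w then (0:ℝ) else (x v * y w) ^ 2)
      ≤ (∑ v, x v ^ 2) * (∑ w, y w ^ 2) := hb2 ▸ hb
    _ ≤ 1 := mul_le_one₀ hx hy0 hy

lemma massB_nonneg {n : ℕ} {M : Pairs n → ℝ} (h0 : ∀ q, 0 ≤ M q) (h1 : ∀ q, M q ≤ 1)
    (ω : Pairs n → Bool) : 0 ≤ massB M ω :=
  Finset.prod_nonneg fun q _ => by
    by_cases h : ω q <;> simp [h, h0 q, h1 q, sub_nonneg]

lemma expect_prod {n : ℕ} (M : Pairs n → ℝ) (g : Pairs n → Bool → ℝ) :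
    ∑ ω : Pairs n → Bool, massB M ω * ∏ q, g q (ω q)
      = ∏ q, (M q * g q true + (1 - M q) * g q false) := by
  classical
  have h1 : ∀ ω : Pairs n → Bool, massB M ω * ∏ q, g q (ω q)
      = ∏ q, ((if ω q then M q else 1 - M q) * g q (ω q)) := by
    intro ω; rw [massB, ← Finset.prod_mul_distrib]
  rw [Finset.sum_congr rfl fun ω _ => h1 ω]
  rw [← Fintype.prod_sum (fun q (b : Bool) => (if b then M q else 1 - M q) * g q b)]
  exact Finset.prod_congr rfl fun q _ => by simp [Fintype.sum_bool]

lemma prB_mono {n : ℕ} {M : Pairs n → ℝ} (h0 : ∀ q, 0 ≤ M q) (h1 : ∀ q, M q ≤ 1)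
    {S T : Set (Pairs n → Bool)} (hST : S ⊆ T) : PrB M S ≤ PrB M T := by
  refine Finset.sum_le_sum fun ω _ => ?_
  by_cases h : ω ∈ S
  · rw [Set.indicator_of_mem h, Set.indicator_of_mem (hST h)]
  · rw [Set.indicator_of_notMem h]
    exact Set.indicator_nonneg (fun a _ => massB_nonneg h0 h1 a) ω

lemma chernoff {n : ℕ} {M : Pairs n → ℝ} (h0 : ∀ q, 0 ≤ M q) (h1 : ∀ q, M q ≤ 1)
    (f : (Pairs n → Bool) → ℝ) (t lam : ℝ) (hlam : 0 ≤ lam) :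
    PrB M {ω | t ≤ f ω} ≤
      Real.exp (-(lam * t)) * ∑ ω : Pairs n → Bool, massB M ω * Real.exp (lam * f ω) := by
  rw [PrB, Finset.mul_sum]
  refine Finset.sum_le_sum fun ω _ => ?_
  by_cases h : ω ∈ {ω | t ≤ f ω}
  · rw [Set.indicator_of_mem h]
    have hfe : (1 : ℝ) ≤ Real.exp (-(lam * t)) * Real.exp (lam * f ω) := by
      rw [← Real.exp_add]
      refine Real.one_le_exp ?_
      have ht : t ≤ f ω := h
      nlinarith
    calc massB M ω = massB M ω * 1 := (mul_one _).symm
      _ ≤ massB M ω * (Real.exp (-(lam * t)) * Real.exp (lam * f ω)) :=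
          mul_le_mul_of_nonneg_left hfe (massB_nonneg h0 h1 ω)
      _ = Real.exp (-(lam * t)) * (massB M ω * Real.exp (lam * f ω)) := by ring
  · rw [Set.indicator_of_notMem h]
    exact mul_nonneg (Real.exp_pos _).le
      (mul_nonneg (massB_nonneg h0 h1 ω) (Real.exp_pos _).le)

set_option maxHeartbeats 1000000 in
theorem statement17
    (n : ℕ) (pb : ℝ) (hpb0 : 0 < pb) (hpb1 : pb ≤ 1)
    (M : Pairs n → ℝ) (hM0 : ∀ q, 0 ≤ M q) (hMpb : ∀ q, M q ≤ pb)
    (x y : Fin n → ℝ) (hx : ∑ v, x v ^ 2 ≤ 1) (hy : ∑ v, y v ^ 2 ≤ 1)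
    (C : ℝ) (hC : 3 < C) :
    PrB M { ω |
        C * Real.sqrt (n * pb) ≤
          (∑ v, ∑ w, (if |x v * y w| ≤ Real.sqrt (pb / n) then x v * Aval ω v w * y w else 0))
            - ∑ v, ∑ w, x v * Mmat M v w * y w } ≤
      Real.exp ((3 - C) * n / 2) := by
  classical
  have hM1 : ∀ q, M q ≤ 1 := fun q => (hMpb q).trans hpb1
  set Lb : ℝ := Real.sqrt (pb / n) with hLb
  set lam : ℝ := Real.sqrt (n / pb) / 2 with hlam
  have hlam0 : 0 ≤ lam := by positivity
  set c : Pairs n → ℝ := fun q =>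
    (if |x q.1.1 * y q.1.2| ≤ Lb then x q.1.1 * y q.1.2 else 0)
    + (if |x q.1.2 * y q.1.1| ≤ Lb then x q.1.2 * y q.1.1 else 0) with hcdef
  set S : (Pairs n → Bool) → ℝ :=
    fun ω => ∑ q, c q * ((if ω q then (1:ℝ) else 0) - M q) with hSdef
  set t : ℝ := (C - 1) * Real.sqrt (n * pb) with htdef
  have hsq1 := sumsq_pairs x y hx hy
  have hpbsqrt : pb * Real.sqrt ((n : ℝ) / pb) = Real.sqrt ((n : ℝ) * pb) := by
    rw [show (n : ℝ) * pb = (n : ℝ) / pb * pb ^ 2 by field_simp,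
      Real.sqrt_mul (by positivity), Real.sqrt_sq hpb0.le]
    ring
  -- Step A: the event is contained in a deviation event for S
  have hsub : { ω : Pairs n → Bool |
        C * Real.sqrt (n * pb) ≤
          (∑ v, ∑ w, (if |x v * y w| ≤ Lb then x v * Aval ω v w * y w else 0))
            - ∑ v, ∑ w, x v * Mmat M v w * y w } ⊆ {ω | t ≤ S ω} := by
    intro ω hω
    simp only [Set.mem_setOf_eq] at hω ⊢
    have hA : ∑ v, ∑ w, (if |x v * y w| ≤ Lb then x v * Aval ω v w * y w else 0)
        = ∑ q : Pairs n, c q * (if ω q then (1:ℝ) else 0) := by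
      rw [sum_pairs (fun v w => if |x v * y w| ≤ Lb then x v * Aval ω v w * y w else 0)
        (by intro v; simp [Aval])]
      refine Finset.sum_congr rfl fun q _ => ?_
      have hq := q.2
      have h1 : Aval ω q.1.1 q.1.2 = (if ω q then (1:ℝ) else 0) := by
        simp only [Aval]; rw [dif_pos hq]
      have h2 : Aval ω q.1.2 q.1.1 = (if ω q then (1:ℝ) else 0) := by
        simp only [Aval]; rw [dif_neg (asymm hq), dif_pos hq]
      rw [h1, h2]
      simp only [hcdef]
      cases hb : ω q <;> by_cases l1 : |x q.1.1 * y q.1.2| ≤ Lb <;>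
        by_cases l2 : |x q.1.2 * y q.1.1| ≤ Lb <;>
        simp [hb, l1, l2] <;> ring
    have hMs : ∑ v, ∑ w, x v * Mmat M v w * y w
        = ∑ q : Pairs n, (x q.1.1 * y q.1.2 + x q.1.2 * y q.1.1) * M q := by
      rw [sum_pairs (fun v w => x v * Mmat M v w * y w)
        (by intro v; simp [Mmat])]
      refine Finset.sum_congr rfl fun q _ => ?_
      have hq := q.2
      simp only [Mmat]
      rw [dif_pos hq, dif_neg (asymm hq), dif_pos hq]
      ring
    rw [hA, hMs] at hω
    have hdiff : ∑ q : Pairs n, c q * (if ω q then (1:ℝ) else 0)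
        - ∑ q : Pairs n, (x q.1.1 * y q.1.2 + x q.1.2 * y q.1.1) * M q - S ω
        = ∑ q : Pairs n, (c q - (x q.1.1 * y q.1.2 + x q.1.2 * y q.1.1)) * M q := by
      simp only [hSdef]
      rw [← Finset.sum_sub_distrib, ← Finset.sum_sub_distrib]
      exact Finset.sum_congr rfl fun q _ => by ring
    have hheavy : ∑ q : Pairs n, (c q - (x q.1.1 * y q.1.2 + x q.1.2 * y q.1.1)) * M q
        ≤ Real.sqrt ((n : ℝ) * pb) := by
      calc ∑ q : Pairs n, (c q - (x q.1.1 * y q.1.2 + x q.1.2 * y q.1.1)) * M q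
          ≤ ∑ q : Pairs n, pb * Real.sqrt ((n : ℝ) / pb)
              * ((x q.1.1 * y q.1.2) ^ 2 + (x q.1.2 * y q.1.1) ^ 2) := by
            refine Finset.sum_le_sum fun q _ => ?_
            have hn : (0 : ℝ) < n := by exact_mod_cast (q.1.1).pos
            have key : ∀ a : ℝ, |(if |a| ≤ Lb then a else 0) - a|
                ≤ Real.sqrt ((n : ℝ) / pb) * a ^ 2 := by
              intro a
              by_cases hl : |a| ≤ Lb
              · rw [if_pos hl, sub_self, abs_zero]; positivity
              · rw [if_neg hl, zero_sub, abs_neg]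
                push_neg at hl
                have h1 : Real.sqrt ((n : ℝ) / pb) * Lb = 1 := by
                  rw [hLb, ← Real.sqrt_mul (by positivity),
                    show (n : ℝ) / pb * (pb / n) = 1 by field_simp]
                  exact Real.sqrt_one
                have h2 : 1 ≤ Real.sqrt ((n : ℝ) / pb) * |a| := by
                  rw [← h1]
                  exact mul_le_mul_of_nonneg_left hl.le (Real.sqrt_nonneg _)
                nlinarith [abs_nonneg a, sq_abs a,
                  mul_le_mul_of_nonneg_right h2 (abs_nonneg a)]
            have ha := key (x q.1.1 * y q.1.2)
            have hb := key (x q.1.2 * y q.1.1)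
            have habs : |c q - (x q.1.1 * y q.1.2 + x q.1.2 * y q.1.1)|
                ≤ Real.sqrt ((n : ℝ) / pb)
                  * ((x q.1.1 * y q.1.2) ^ 2 + (x q.1.2 * y q.1.1) ^ 2) := by
              simp only [hcdef]
              calc |(if |x q.1.1 * y q.1.2| ≤ Lb then x q.1.1 * y q.1.2 else 0)
                    + (if |x q.1.2 * y q.1.1| ≤ Lb then x q.1.2 * y q.1.1 else 0)
                    - (x q.1.1 * y q.1.2 + x q.1.2 * y q.1.1)|
                  = |((if |x q.1.1 * y q.1.2| ≤ Lb then x q.1.1 * y q.1.2 else 0)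
                      - x q.1.1 * y q.1.2)
                    + ((if |x q.1.2 * y q.1.1| ≤ Lb then x q.1.2 * y q.1.1 else 0)
                      - x q.1.2 * y q.1.1)| := by ring_nf
                _ ≤ |(if |x q.1.1 * y q.1.2| ≤ Lb then x q.1.1 * y q.1.2 else 0)
                      - x q.1.1 * y q.1.2|
                    + |(if |x q.1.2 * y q.1.1| ≤ Lb then x q.1.2 * y q.1.1 else 0)
                      - x q.1.2 * y q.1.1| := abs_add_le _ _
                _ ≤ Real.sqrt ((n : ℝ) / pb)
                    * ((x q.1.1 * y q.1.2) ^ 2 + (x q.1.2 * y q.1.1) ^ 2) := by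
                    rw [mul_add]; exact add_le_add ha hb
            calc (c q - (x q.1.1 * y q.1.2 + x q.1.2 * y q.1.1)) * M q
                ≤ |c q - (x q.1.1 * y q.1.2 + x q.1.2 * y q.1.1)| * M q :=
                  mul_le_mul_of_nonneg_right (le_abs_self _) (hM0 q)
              _ ≤ (Real.sqrt ((n : ℝ) / pb)
                    * ((x q.1.1 * y q.1.2) ^ 2 + (x q.1.2 * y q.1.1) ^ 2)) * pb := by
                  refine mul_le_mul habs (hMpb q) (hM0 q) ?_
                  positivity
              _ = pb * Real.sqrt ((n : ℝ) / pb)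
                    * ((x q.1.1 * y q.1.2) ^ 2 + (x q.1.2 * y q.1.1) ^ 2) := by ring
        _ = pb * Real.sqrt ((n : ℝ) / pb)
              * ∑ q : Pairs n, ((x q.1.1 * y q.1.2) ^ 2 + (x q.1.2 * y q.1.1) ^ 2) :=
            (Finset.mul_sum _ _ _).symm
        _ ≤ pb * Real.sqrt ((n : ℝ) / pb) * 1 :=
            mul_le_mul_of_nonneg_left hsq1 (by positivity)
        _ = Real.sqrt ((n : ℝ) * pb) := by rw [mul_one, hpbsqrt]
    have := hdiff ▸ hheavy
    rw [htdef]
    nlinarith [hω, this]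
  -- Step B/C: Chernoff bound
  have hfac : ∀ q : Pairs n,
      M q * Real.exp (lam * (c q * ((1:ℝ) - M q)))
        + (1 - M q) * Real.exp (lam * (c q * ((0:ℝ) - M q)))
      ≤ Real.exp ((lam * c q) ^ 2 * pb) := by
    intro q
    have hn : (0 : ℝ) < n := by exact_mod_cast (q.1.1).pos
    have hcb : |c q| ≤ 2 * Lb := by
      simp only [hcdef]
      have h1 : |(if |x q.1.1 * y q.1.2| ≤ Lb then x q.1.1 * y q.1.2 else 0)| ≤ Lb := by
        split
        · assumption
        · rw [abs_zero, hLb]; positivity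
      have h2 : |(if |x q.1.2 * y q.1.1| ≤ Lb then x q.1.2 * y q.1.1 else 0)| ≤ Lb := by
        split
        · assumption
        · rw [abs_zero, hLb]; positivity
      calc |(if |x q.1.1 * y q.1.2| ≤ Lb then x q.1.1 * y q.1.2 else 0)
            + (if |x q.1.2 * y q.1.1| ≤ Lb then x q.1.2 * y q.1.1 else 0)|
          ≤ |(if |x q.1.1 * y q.1.2| ≤ Lb then x q.1.1 * y q.1.2 else 0)|
            + |(if |x q.1.2 * y q.1.1| ≤ Lb then x q.1.2 * y q.1.1 else 0)| := abs_add_le _ _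
        _ ≤ 2 * Lb := by linarith
    have hprod : Real.sqrt ((n : ℝ) / pb) * Lb = 1 := by
      rw [hLb, ← Real.sqrt_mul (by positivity),
        show (n : ℝ) / pb * (pb / n) = 1 by field_simp]
      exact Real.sqrt_one
    have hu : |lam * c q| ≤ 1 := by
      rw [abs_mul, abs_of_nonneg hlam0, hlam]
      calc Real.sqrt ((n : ℝ) / pb) / 2 * |c q|
          ≤ Real.sqrt ((n : ℝ) / pb) / 2 * (2 * Lb) :=
            mul_le_mul_of_nonneg_left hcb (by positivity)
        _ = Real.sqrt ((n : ℝ) / pb) * Lb := by ring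
        _ = 1 := hprod
    have := factor_bound (hM0 q) (hMpb q) hpb1 hu
    rw [show lam * c q * (1 - M q) = lam * (c q * ((1:ℝ) - M q)) by ring,
      show lam * c q * (0 - M q) = lam * (c q * ((0:ℝ) - M q)) by ring] at this
    exact this
  have hsumc : ∑ q : Pairs n, (lam * c q) ^ 2 * pb ≤ (n : ℝ) / 2 := by
    have hlamsq : lam ^ 2 = (n : ℝ) / pb / 4 := by
      rw [hlam, div_pow, Real.sq_sqrt (by positivity)]
      norm_num
    calc ∑ q : Pairs n, (lam * c q) ^ 2 * pb
        ≤ ∑ q : Pairs n, lam ^ 2 * pb * 2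
            * ((x q.1.1 * y q.1.2) ^ 2 + (x q.1.2 * y q.1.1) ^ 2) := by
          refine Finset.sum_le_sum fun q _ => ?_
          have h1 : (if |x q.1.1 * y q.1.2| ≤ Lb then x q.1.1 * y q.1.2 else 0) ^ 2
              ≤ (x q.1.1 * y q.1.2) ^ 2 := by
            split
            · exact le_rfl
            · simpa using sq_nonneg (x q.1.1 * y q.1.2)
          have h2 : (if |x q.1.2 * y q.1.1| ≤ Lb then x q.1.2 * y q.1.1 else 0) ^ 2
              ≤ (x q.1.2 * y q.1.1) ^ 2 := by
            split
            · exact le_rfl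
            · simpa using sq_nonneg (x q.1.2 * y q.1.1)
          have hc2 : c q ^ 2 ≤ 2 * ((x q.1.1 * y q.1.2) ^ 2 + (x q.1.2 * y q.1.1) ^ 2) := by
            simp only [hcdef]
            nlinarith [sq_nonneg ((if |x q.1.1 * y q.1.2| ≤ Lb then x q.1.1 * y q.1.2 else 0)
              - (if |x q.1.2 * y q.1.1| ≤ Lb then x q.1.2 * y q.1.1 else 0)), h1, h2]
          calc (lam * c q) ^ 2 * pb = lam ^ 2 * pb * c q ^ 2 := by ring
            _ ≤ lam ^ 2 * pb * (2 * ((x q.1.1 * y q.1.2) ^ 2 + (x q.1.2 * y q.1.1) ^ 2)) :=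
                mul_le_mul_of_nonneg_left hc2 (by positivity)
            _ = lam ^ 2 * pb * 2 * ((x q.1.1 * y q.1.2) ^ 2 + (x q.1.2 * y q.1.1) ^ 2) := by
                ring
      _ = lam ^ 2 * pb * 2
            * ∑ q : Pairs n, ((x q.1.1 * y q.1.2) ^ 2 + (x q.1.2 * y q.1.1) ^ 2) :=
          (Finset.mul_sum _ _ _).symm
      _ ≤ lam ^ 2 * pb * 2 * 1 := mul_le_mul_of_nonneg_left hsq1 (by positivity)
      _ = (n : ℝ) / 2 := by rw [hlamsq]; field_simp; ring
  have hlt : lam * t = (C - 1) * ((n : ℝ) / 2) := by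
    have h1 : Real.sqrt ((n : ℝ) / pb) * Real.sqrt ((n : ℝ) * pb) = (n : ℝ) := by
      rw [← Real.sqrt_mul (by positivity),
        show (n : ℝ) / pb * ((n : ℝ) * pb) = ((n : ℝ)) ^ 2 by field_simp]
      exact Real.sqrt_sq (Nat.cast_nonneg n)
    rw [hlam, htdef]
    calc Real.sqrt ((n : ℝ) / pb) / 2 * ((C - 1) * Real.sqrt ((n : ℝ) * pb))
        = (C - 1) * (Real.sqrt ((n : ℝ) / pb) * Real.sqrt ((n : ℝ) * pb)) / 2 := by ring
      _ = (C - 1) * ((n : ℝ) / 2) := by rw [h1]; ring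
  calc PrB M { ω : Pairs n → Bool |
        C * Real.sqrt (n * pb) ≤
          (∑ v, ∑ w, (if |x v * y w| ≤ Lb then x v * Aval ω v w * y w else 0))
            - ∑ v, ∑ w, x v * Mmat M v w * y w }
      ≤ PrB M {ω | t ≤ S ω} := prB_mono hM0 hM1 hsub
    _ ≤ Real.exp (-(lam * t)) * ∑ ω : Pairs n → Bool, massB M ω * Real.exp (lam * S ω) :=
        chernoff hM0 hM1 S t lam hlam0
    _ = Real.exp (-(lam * t)) * ∏ q : Pairs n,
          (M q * Real.exp (lam * (c q * ((1:ℝ) - M q)))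
            + (1 - M q) * Real.exp (lam * (c q * ((0:ℝ) - M q)))) := by
        congr 1
        have h1 : ∀ ω : Pairs n → Bool, massB M ω * Real.exp (lam * S ω)
            = massB M ω * ∏ q : Pairs n,
                Real.exp (lam * (c q * ((if ω q then (1:ℝ) else 0) - M q))) := by
          intro ω
          rw [hSdef]
          simp only []
          rw [Finset.mul_sum, Real.exp_sum]
        rw [Finset.sum_congr rfl fun ω _ => h1 ω]
        exact expect_prod M
          (fun q b => Real.exp (lam * (c q * ((if b then (1:ℝ) else 0) - M q))))
    _ ≤ Real.exp (-(lam * t)) * ∏ q : Pairs n, Real.exp ((lam * c q) ^ 2 * pb) := by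
        refine mul_le_mul_of_nonneg_left ?_ (Real.exp_pos _).le
        refine Finset.prod_le_prod (fun q _ => ?_) (fun q _ => hfac q)
        exact add_nonneg (mul_nonneg (hM0 q) (Real.exp_pos _).le)
          (mul_nonneg (by linarith [hM1 q]) (Real.exp_pos _).le)
    _ = Real.exp (-(lam * t)) * Real.exp (∑ q : Pairs n, (lam * c q) ^ 2 * pb) := by
        rw [Real.exp_sum]
    _ ≤ Real.exp (-(lam * t)) * Real.exp ((n : ℝ) / 2) :=
        mul_le_mul_of_nonneg_left (Real.exp_le_exp.mpr hsumc) (Real.exp_pos _).le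
    _ ≤ Real.exp ((3 - C) * n / 2) := by
        rw [← Real.exp_add]
        refine Real.exp_le_exp.mpr ?_
        rw [hlt]
        nlinarith [Nat.cast_nonneg (α := ℝ) n, hC]
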